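/- Let F be a nonempty finite type with q elements and let n ≥ 1. For every v : Fin n → F there exists c ∈ F with hammingDist v (constant vector c) ≤ ⌊n(q−1)/q⌋; moreover, there exists v : Fin n → F such that hammingDist v (constant vector c) ≥ ⌊n(q−1)/q⌋ for every c ∈ F. Hence the covering radius of the q-ary repetition code {constant vectors} ⊆ (Fin n → F) equals ⌊n(q−1)/q⌋. -/

import Mathlib

lemma stmt8_arith (q n : ℕ) (hq : 1 ≤ q) (hn : 1 ≤ n) :
    n * (q-1) / q = n - ((n-1)/q + 1) := by
  obtain ⟨p, rfl⟩ : ∃ p, q = p + 1 := ⟨q - 1, by omega⟩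
  obtain ⟨m, rfl⟩ : ∃ m, n = m + 1 := ⟨n - 1, by omega⟩
  simp only [Nat.add_sub_cancel]
  set d := m / (p+1) with hd
  have hr : (p+1) * d + m % (p+1) = m := Nat.div_add_mod _ _
  set r := m % (p+1) with hrr
  have hrlt : r < p + 1 := Nat.mod_lt _ (by omega)
  have hgoal : (m+1) * p / (p+1) = p * d + r := by
    apply Nat.div_eq_of_lt_le
    · nlinarith
    · nlinarith
  have hx : (p+1)*d = p*d + d := by ring
  rw [hgoal]; omega

/-- The covering radius of the `q`-ary repetition code of length `n ≥ 1`
over a finite alphabet `F` with `q` elements equals `⌊n(q−1)/q⌋`. -/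
theorem stmt8 (F : Type) [Fintype F] [Nonempty F] [DecidableEq F] (n : ℕ) (hn : 1 ≤ n) :
    (∀ v : Fin n → F, ∃ c : F,
      hammingDist v (fun _ => c) ≤ n * (Fintype.card F - 1) / Fintype.card F) ∧
    (∃ v : Fin n → F, ∀ c : F,
      n * (Fintype.card F - 1) / Fintype.card F ≤ hammingDist v (fun _ => c)) ∧
    sSup {d : ℕ | ∃ v : Fin n → F,
        d = sInf {e : ℕ | ∃ c : F, e = hammingDist v (fun _ => c)}} =
      n * (Fintype.card F - 1) / Fintype.card F := by
  classical
  set q := Fintype.card F with hqdef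
  have hq : 1 ≤ q := Fintype.card_pos
  set K := (n-1)/q + 1 with hK
  have hRK : n * (q - 1) / q = n - K := stmt8_arith q n hq hn
  have hKn : K ≤ n := by
    have : (n-1)/q ≤ n - 1 := Nat.div_le_self _ _
    omega
  -- distance to constant vector in terms of fiber count
  have hdist : ∀ (v : Fin n → F) (c : F),
      hammingDist v (fun _ => c) = n - (Finset.univ.filter fun i => v i = c).card := by
    intro v c
    have h1 : (Finset.univ.filter fun i => v i = c).card
        + (Finset.univ.filter fun i => ¬ v i = c).card = n := by
      rw [Finset.card_filter_add_card_filter_not]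
      simp
    have h2 : hammingDist v (fun _ => c)
        = (Finset.univ.filter fun i => ¬ v i = c).card := rfl
    omega
  -- part 1: for every v there is c with big fiber
  have part1 : ∀ v : Fin n → F, ∃ c : F,
      K ≤ (Finset.univ.filter fun i => v i = c).card := by
    intro v
    by_contra h
    push_neg at h
    have hsum : (Finset.univ : Finset (Fin n)).card
        = ∑ c : F, (Finset.univ.filter fun i => v i = c).card :=
      Finset.card_eq_sum_card_fiberwise (fun i _ => Finset.mem_univ (v i))
    have hle : ∑ c : F, (Finset.univ.filter fun i => v i = c).card
        ≤ q * ((n-1)/q) := by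
      calc ∑ c : F, (Finset.univ.filter fun i => v i = c).card
          ≤ ∑ _c : F, (n-1)/q := Finset.sum_le_sum (fun c _ => by have := h c; omega)
        _ = q * ((n-1)/q) := by simp [Finset.sum_const, mul_comm, ← hqdef]
    have hmd : q * ((n-1)/q) ≤ n - 1 := Nat.mul_div_le _ _
    simp [Finset.card_univ] at hsum
    omega
  have part1' : ∀ v : Fin n → F, ∃ c : F,
      hammingDist v (fun _ => c) ≤ n * (q - 1) / q := by
    intro v
    obtain ⟨c, hc⟩ := part1 v
    exact ⟨c, by rw [hdist, hRK]; exact Nat.sub_le_sub_left hc n⟩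
  -- part 2: the balanced vector
  have e := Fintype.equivFin F
  set v₀ : Fin n → F := fun i => e.symm ⟨(i : ℕ) % q, Nat.mod_lt _ hq⟩ with hv₀
  have hfiber : ∀ c : F, (Finset.univ.filter fun i => v₀ i = c).card ≤ K := by
    intro c
    have hmaps : ∀ i ∈ (Finset.univ.filter fun i => v₀ i = c),
        (i : ℕ) / q ∈ Finset.range K := by
      intro i hi
      have : (i : ℕ) / q ≤ (n-1)/q := Nat.div_le_div_right (by omega)
      simp only [Finset.mem_range]; omega
    have hmod : ∀ i ∈ (Finset.univ.filter fun i => v₀ i = c),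
        (i : ℕ) % q = ((e c : Fin q) : ℕ) := by
      intro i hi
      simp only [Finset.mem_filter, hv₀] at hi
      have := hi.2
      have h2 : (⟨(i : ℕ) % q, Nat.mod_lt _ hq⟩ : Fin q) = e c := by
        rw [← this]; simp
      exact congrArg Fin.val h2
    have hinj : Set.InjOn (fun i : Fin n => (i : ℕ) / q)
        (Finset.univ.filter fun i => v₀ i = c) := by
      intro i hi j hj hij
      have hi' := hmod i hi
      have hj' := hmod j hj
      have h1 := Nat.div_add_mod (i : ℕ) q
      have h2 := Nat.div_add_mod (j : ℕ) q
      simp only at hij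
      apply Fin.ext
      have : q * ((i:ℕ)/q) = q * ((j:ℕ)/q) := by rw [hij]
      omega
    have := Finset.card_le_card_of_injOn _ hmaps hinj
    simpa using this
  have part2' : ∀ c : F, n * (q - 1) / q ≤ hammingDist v₀ (fun _ => c) := by
    intro c
    rw [hdist, hRK]
    exact Nat.sub_le_sub_left (hfiber c) n
  refine ⟨part1', ⟨v₀, part2'⟩, ?_⟩
  -- part 3
  set R := n * (q - 1) / q with hRdef
  have hinf_le : ∀ v : Fin n → F,
      sInf {e : ℕ | ∃ c : F, e = hammingDist v (fun _ => c)} ≤ R := by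
    intro v
    obtain ⟨c, hc⟩ := part1' v
    exact le_trans (Nat.sInf_le ⟨c, rfl⟩) hc
  have hinf_v₀ : sInf {e : ℕ | ∃ c : F, e = hammingDist v₀ (fun _ => c)} = R := by
    have hne : {e : ℕ | ∃ c : F, e = hammingDist v₀ (fun _ => c)}.Nonempty :=
      ⟨hammingDist v₀ (fun _ => Classical.arbitrary F), Classical.arbitrary F, rfl⟩
    apply le_antisymm (hinf_le v₀)
    apply le_csInf hne
    rintro e ⟨c, rfl⟩
    exact part2' c
  have hSne : {d : ℕ | ∃ v : Fin n → F,
      d = sInf {e : ℕ | ∃ c : F, e = hammingDist v (fun _ => c)}}.Nonempty :=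
    ⟨R, v₀, hinf_v₀.symm⟩
  have hub : R ∈ upperBounds {d : ℕ | ∃ v : Fin n → F,
      d = sInf {e : ℕ | ∃ c : F, e = hammingDist v (fun _ => c)}} := by
    rintro d ⟨v, rfl⟩
    exact hinf_le v
  exact le_antisymm (csSup_le hSne hub) (le_csSup ⟨R, hub⟩ ⟨v₀, hinf_v₀.symm⟩)
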